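/- arXiv:1909.00880 — 14 statements merged into one kernel-verified Lean document; each statement's English description precedes it below -/
import Mathlib

section
/- A real symmetric 2×2 matrix A = (a_ij) is strictly copositive (i.e., xᵀAx > 0 for all nonzero x in the nonnegative orthant) if and only if a_11 > 0, a_22 > 0, and a_12 + √(a_11 a_22) > 0. -/
theorem strictly_copositive_two_by_two (A : Matrix (Fin 2) (Fin 2) ℝ) (hA : A.IsSymm) :
    (∀ x : Fin 2 → ℝ, (∀ i, 0 ≤ x i) → x ≠ 0 → 0 < dotProduct x (A.mulVec x)) ↔
      (0 < A 0 0 ∧ 0 < A 1 1 ∧ 0 < A 0 1 + Real.sqrt (A 0 0 * A 1 1)) := by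
  have hsym : A 1 0 = A 0 1 := by
    have := hA.apply 0 1
    simpa using this
  have hexp : ∀ x : Fin 2 → ℝ, dotProduct x (A.mulVec x) =
      A 0 0 * x 0 * x 0 + 2 * A 0 1 * x 0 * x 1 + A 1 1 * x 1 * x 1 := by
    intro x
    simp [dotProduct, Matrix.mulVec, Fin.sum_univ_two, hsym]
    ring
  constructor
  · intro h
    have h00 : 0 < A 0 0 := by
      have := h ![1, 0] (by intro i; fin_cases i <;> norm_num)
        (by intro hc; have := congrFun hc 0; simp at this)
      rw [hexp] at this; simpa using this
    have h11 : 0 < A 1 1 := by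
      have := h ![0, 1] (by intro i; fin_cases i <;> norm_num)
        (by intro hc; have := congrFun hc 1; simp at this)
      rw [hexp] at this; simpa using this
    refine ⟨h00, h11, ?_⟩
    set s := Real.sqrt (A 0 0 * A 1 1) with hs
    have hspos : 0 < s := Real.sqrt_pos.mpr (mul_pos h00 h11)
    have hssq : s ^ 2 = A 0 0 * A 1 1 := Real.sq_sqrt (mul_pos h00 h11).le
    rcases le_or_gt 0 (A 0 1) with hb | hb
    · linarith
    · have hc0 : (0:ℝ) ≤ Real.sqrt (A 1 1) := Real.sqrt_nonneg _
      have hc1 : (0:ℝ) ≤ Real.sqrt (A 0 0) := Real.sqrt_nonneg _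
      have hq := h ![Real.sqrt (A 1 1), Real.sqrt (A 0 0)]
        (by intro i; fin_cases i <;> simpa)
        (by
          intro hc
          have := congrFun hc 0
          simp at this
          exact absurd this (by positivity))
      rw [hexp] at hq
      simp at hq
      have e0 : Real.sqrt (A 1 1) * Real.sqrt (A 1 1) = A 1 1 :=
        Real.mul_self_sqrt h11.le
      have e1 : Real.sqrt (A 0 0) * Real.sqrt (A 0 0) = A 0 0 :=
        Real.mul_self_sqrt h00.le
      have e2 : Real.sqrt (A 1 1) * Real.sqrt (A 0 0) = s := by
        rw [hs, mul_comm (A 0 0), Real.sqrt_mul h11.le]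
      nlinarith [hq, hspos, hssq]
  · rintro ⟨h00, h11, h3⟩ x hx hx0
    rw [hexp]
    set s := Real.sqrt (A 0 0 * A 1 1) with hs
    have hspos : 0 < s := Real.sqrt_pos.mpr (mul_pos h00 h11)
    have hssq : s * s = A 0 0 * A 1 1 := Real.mul_self_sqrt (mul_pos h00 h11).le
    have hx0' : 0 ≤ x 0 := hx 0
    have hx1' : 0 ≤ x 1 := hx 1
    have e0 : Real.sqrt (A 0 0) * Real.sqrt (A 0 0) = A 0 0 := Real.mul_self_sqrt h00.le
    have e1 : Real.sqrt (A 1 1) * Real.sqrt (A 1 1) = A 1 1 := Real.mul_self_sqrt h11.le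
    have e2 : Real.sqrt (A 0 0) * Real.sqrt (A 1 1) = s := (Real.sqrt_mul h00.le _).symm
    have key : A 0 0 * x 0 * x 0 + 2 * A 0 1 * x 0 * x 1 + A 1 1 * x 1 * x 1 =
        (Real.sqrt (A 0 0) * x 0 - Real.sqrt (A 1 1) * x 1) ^ 2
          + 2 * (A 0 1 + s) * (x 0 * x 1) := by
      linear_combination -(x 0)^2 * e0 - (x 1)^2 * e1 + 2 * x 0 * x 1 * e2
    rw [key]
    rcases (lt_or_eq_of_le hx0').symm with h0 | h0
    · rcases (lt_or_eq_of_le hx1').symm with h1 | h1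
      · -- both zero: contradiction
        exfalso; apply hx0; funext i; fin_cases i <;> simp [← h0, ← h1]
      · -- x0 = 0, x1 > 0
        have : (Real.sqrt (A 0 0) * x 0 - Real.sqrt (A 1 1) * x 1) ^ 2 =
            A 1 1 * x 1 ^ 2 := by rw [← h0]; nlinarith [e1]
        rw [this, ← h0]
        have : 0 < A 1 1 * x 1 ^ 2 := by positivity
        linarith
    · rcases (lt_or_eq_of_le hx1').symm with h1 | h1
      · -- x0 > 0, x1 = 0
        have hsq : (Real.sqrt (A 0 0) * x 0 - Real.sqrt (A 1 1) * x 1) ^ 2 =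
            A 0 0 * x 0 ^ 2 := by rw [← h1]; nlinarith [e0]
        rw [hsq, ← h1]
        have : 0 < A 0 0 * x 0 ^ 2 := by positivity
        linarith
      · have : 0 < 2 * (A 0 1 + s) * (x 0 * x 1) := by positivity
        nlinarith [sq_nonneg (Real.sqrt (A 0 0) * x 0 - Real.sqrt (A 1 1) * x 1)]
end

section
/- Let p(t) = a t² + 2b(1−t)t + c(1−t)² be a quadratic Bernstein–Bézier polynomial on [0,1]. Then p(t) ≥ 0 for all t ∈ [0,1] if and only if a ≥ 0, c ≥ 0, and b + √(ac) ≥ 0. -/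
theorem bernstein_bezier_nonneg (a b c : ℝ) :
    (∀ t ∈ Set.Icc (0 : ℝ) 1, 0 ≤ a * t ^ 2 + 2 * b * (1 - t) * t + c * (1 - t) ^ 2) ↔
      (0 ≤ a ∧ 0 ≤ c ∧ 0 ≤ b + Real.sqrt (a * c)) := by
  constructor
  · intro h
    have ha : 0 ≤ a := by have := h 1 (by norm_num); nlinarith
    have hc : 0 ≤ c := by have := h 0 (by norm_num); nlinarith
    refine ⟨ha, hc, ?_⟩
    rcases le_or_gt 0 b with hb | hb
    · have := Real.sqrt_nonneg (a * c); linarith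
    · -- b < 0
      have hb0 : b ≠ 0 := ne_of_lt hb
      have hapos : 0 < a := by
        rcases ha.lt_or_eq with h' | h'
        · exact h'
        · exfalso
          have hd : 0 < c - 2 * b := by linarith
          set t : ℝ := (c - b) / (c - 2 * b) with htdef
          have ht0 : 0 ≤ t := div_nonneg (by linarith) hd.le
          have ht1 : t ≤ 1 := by rw [div_le_one hd]; linarith
          have hp := h t ⟨ht0, ht1⟩
          rw [← h'] at hp
          have e : 0 * t ^ 2 + 2 * b * (1 - t) * t + c * (1 - t) ^ 2
              = -(b ^ 2) / (c - 2 * b) := by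
            rw [htdef]; field_simp [show c - b * 2 ≠ 0 by linarith]; ring
          rw [e] at hp
          have : 0 < b ^ 2 / (c - 2 * b) := div_pos (by positivity) hd
          rw [neg_div] at hp; linarith
      have hcpos : 0 < c := by
        rcases hc.lt_or_eq with h' | h'
        · exact h'
        · exfalso
          have hd : 0 < a - 2 * b := by linarith
          set t : ℝ := -b / (a - 2 * b) with htdef
          have ht0 : 0 ≤ t := div_nonneg (by linarith) hd.le
          have ht1 : t ≤ 1 := by rw [div_le_one hd]; linarith
          have hp := h t ⟨ht0, ht1⟩
          rw [← h'] at hp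
          have e : a * t ^ 2 + 2 * b * (1 - t) * t + 0 * (1 - t) ^ 2
              = -(b ^ 2) / (a - 2 * b) := by
            rw [htdef]; field_simp [show a - b * 2 ≠ 0 by linarith]; ring
          rw [e] at hp
          have : 0 < b ^ 2 / (a - 2 * b) := div_pos (by positivity) hd
          rw [neg_div] at hp; linarith
      -- main case: a > 0, c > 0
      set sa := Real.sqrt a with hsa
      set sc := Real.sqrt c with hsc
      have ha2 : sa ^ 2 = a := Real.sq_sqrt ha
      have hc2 : sc ^ 2 = c := Real.sq_sqrt hc
      have hsap : 0 < sa := Real.sqrt_pos.mpr hapos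
      have hscp : 0 < sc := Real.sqrt_pos.mpr hcpos
      have hsum : 0 < sa + sc := by linarith
      set t : ℝ := sc / (sa + sc) with htdef
      have ht0 : 0 ≤ t := by positivity
      have ht1 : t ≤ 1 := by rw [div_le_one hsum]; linarith
      have hp := h t ⟨ht0, ht1⟩
      have e : a * t ^ 2 + 2 * b * (1 - t) * t + c * (1 - t) ^ 2
          = 2 * (sa * sc) * (sa * sc + b) / (sa + sc) ^ 2 := by
        rw [htdef, ← ha2, ← hc2]; field_simp; ring
      rw [e] at hp
      have hmul : 0 ≤ 2 * (sa * sc) * (sa * sc + b) := by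
        by_contra hneg
        push_neg at hneg
        have : 2 * (sa * sc) * (sa * sc + b) / (sa + sc) ^ 2 < 0 :=
          div_neg_of_neg_of_pos hneg (by positivity)
        linarith
      have hss : Real.sqrt (a * c) = sa * sc := Real.sqrt_mul ha c
      rw [hss]
      nlinarith [mul_pos hsap hscp]
  · rintro ⟨ha, hc, hb⟩ t ⟨ht0, ht1⟩
    have hs : Real.sqrt (a * c) = Real.sqrt a * Real.sqrt c := Real.sqrt_mul ha c
    rw [hs] at hb
    have htt : 0 ≤ t * (1 - t) := mul_nonneg ht0 (by linarith)
    nlinarith [sq_nonneg (Real.sqrt a * t - Real.sqrt c * (1 - t)),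
      Real.sq_sqrt ha, Real.sq_sqrt hc, mul_nonneg hb htt,
      Real.sqrt_nonneg a, Real.sqrt_nonneg c]
end

section
/- Let p(t) = a t² + 2b(1−t)t + c(1−t)² be a quadratic Bernstein–Bézier polynomial on [0,1]. Then p(t) > 0 for all t ∈ [0,1] if and only if a > 0, c > 0, and b + √(ac) > 0. -/
theorem bernstein_bezier_pos (a b c : ℝ) :
    (∀ t ∈ Set.Icc (0 : ℝ) 1, 0 < a * t ^ 2 + 2 * b * (1 - t) * t + c * (1 - t) ^ 2) ↔
      (0 < a ∧ 0 < c ∧ 0 < b + Real.sqrt (a * c)) := by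
  constructor
  · intro h
    have ha : 0 < a := by
      have := h 1 (by norm_num)
      nlinarith [this]
    have hc : 0 < c := by
      have := h 0 (by norm_num)
      nlinarith [this]
    refine ⟨ha, hc, ?_⟩
    obtain ⟨sa, hsa, rfl⟩ : ∃ sa, 0 < sa ∧ a = sa ^ 2 :=
      ⟨Real.sqrt a, Real.sqrt_pos.2 ha, (Real.sq_sqrt ha.le).symm⟩
    obtain ⟨sc, hsc, rfl⟩ : ∃ sc, 0 < sc ∧ c = sc ^ 2 :=
      ⟨Real.sqrt c, Real.sqrt_pos.2 hc, (Real.sq_sqrt hc.le).symm⟩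
    have hm : Real.sqrt (sa ^ 2 * sc ^ 2) = sa * sc := by
      rw [show sa ^ 2 * sc ^ 2 = (sa * sc) ^ 2 by ring, Real.sqrt_sq (by positivity)]
    rw [hm]
    have hS : 0 < sa + sc := by linarith
    set t : ℝ := sc / (sa + sc) with ht
    have ht0 : 0 ≤ t := div_nonneg hsc.le hS.le
    have ht1 : t ≤ 1 := by rw [div_le_one hS]; linarith
    have hp := h t ⟨ht0, ht1⟩
    have key : sa ^ 2 * t ^ 2 + 2 * b * (1 - t) * t + sc ^ 2 * (1 - t) ^ 2
        = 2 * (sa * sc) * (sa * sc + b) / (sa + sc) ^ 2 := by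
      rw [ht]; field_simp; ring
    rw [key] at hp
    have hS2 : 0 < (sa + sc) ^ 2 := by positivity
    have hprod : 0 < 2 * (sa * sc) * (sa * sc + b) :=
      (div_pos_iff.1 hp).elim (fun ⟨h1, _⟩ => h1)
        (fun ⟨_, h2⟩ => absurd h2 (not_lt.2 hS2.le))
    nlinarith [hprod, mul_pos hsa hsc]
  · rintro ⟨ha, hc, hb⟩ t ⟨ht0, ht1⟩
    have hsa2 : Real.sqrt a ^ 2 = a := Real.sq_sqrt ha.le
    have hsc2 : Real.sqrt c ^ 2 = c := Real.sq_sqrt hc.le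
    have hm : Real.sqrt (a * c) = Real.sqrt a * Real.sqrt c := Real.sqrt_mul ha.le c
    rcases eq_or_lt_of_le ht0 with rfl | ht0'
    · norm_num; linarith
    rcases eq_or_lt_of_le ht1 with rfl | ht1'
    · norm_num; linarith
    have hts : 0 < (b + Real.sqrt (a * c)) * (t * (1 - t)) :=
      mul_pos hb (mul_pos ht0' (by linarith))
    nlinarith [sq_nonneg (Real.sqrt a * t - Real.sqrt c * (1 - t)), hsa2, hsc2, hm, hts]
end

section
/- Let a₀ > 0, a₄ > 0 and set I = a₀a₄ − 4a₁a₃ + 3a₂², J = a₀a₂a₄ + 2a₁a₂a₃ − a₂³ − a₀a₃² − a₁²a₄, H = a₀a₂ − a₁². If I³ − 27J² > 0 and H ≥ 0, then f(t) = a₀t⁴ + 4a₁t³ + 6a₂t² + 4a₃t + a₄ > 0 for all real t ≠ 0. -/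
theorem quartic_pos_of_discriminant (a0 a1 a2 a3 a4 : ℝ) (ha0 : 0 < a0) (ha4 : 0 < a4)
    (hΔ : 0 < (a0 * a4 - 4 * a1 * a3 + 3 * a2 ^ 2) ^ 3
        - 27 * (a0 * a2 * a4 + 2 * a1 * a2 * a3 - a2 ^ 3 - a0 * a3 ^ 2 - a1 ^ 2 * a4) ^ 2)
    (hH : 0 ≤ a0 * a2 - a1 ^ 2) :
    ∀ t : ℝ, t ≠ 0 →
      0 < a0 * t ^ 4 + 4 * a1 * t ^ 3 + 6 * a2 * t ^ 2 + 4 * a3 * t + a4 := by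
  intro t _
  set H : ℝ := a0 * a2 - a1 ^ 2 with hHdef
  set G : ℝ := a0 ^ 2 * a3 - 3 * a0 * a1 * a2 + 2 * a1 ^ 3 with hGdef
  set r : ℝ := a0 ^ 3 * a4 + 6 * a0 * a1 ^ 2 * a2 - 4 * a0 ^ 2 * a1 * a3 - 3 * a1 ^ 4 with hrdef
  set Iv : ℝ := a0 ^ 2 * (a0 * a4 - 4 * a1 * a3 + 3 * a2 ^ 2) with hIdef
  set Jv : ℝ := a0 ^ 3 *
    (a0 * a2 * a4 + 2 * a1 * a2 * a3 - a2 ^ 3 - a0 * a3 ^ 2 - a1 ^ 2 * a4) with hJdef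
  have ha0' : (0:ℝ) < a0 ^ 2 := by positivity
  have ha06 : (0:ℝ) < a0 ^ 6 := by positivity
  -- Iv^3 - 27 Jv^2 > 0
  have hΔ' : 0 < Iv ^ 3 - 27 * Jv ^ 2 := by
    have : Iv ^ 3 - 27 * Jv ^ 2 = a0 ^ 6 *
        ((a0 * a4 - 4 * a1 * a3 + 3 * a2 ^ 2) ^ 3
        - 27 * (a0 * a2 * a4 + 2 * a1 * a2 * a3 - a2 ^ 3 - a0 * a3 ^ 2 - a1 ^ 2 * a4) ^ 2) := by
      rw [hIdef, hJdef]; ring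
    rw [this]
    exact mul_pos ha06 hΔ
  have hIpos : 0 < Iv := by
    by_contra h
    push_neg at h
    nlinarith [sq_nonneg Jv, sq_nonneg Iv]
  -- relations with r
  have hIr : Iv = r + 3 * H ^ 2 := by rw [hIdef, hrdef, hHdef]; ring
  have hJr : Jv = H * r - H ^ 3 - G ^ 2 := by rw [hJdef, hrdef, hHdef, hGdef]; ring
  clear_value H G r Iv Jv
  set w : ℝ := Real.sqrt (Iv / 3) with hwdef
  have hw2 : w ^ 2 = Iv / 3 := Real.sq_sqrt (by linarith)
  have hwpos : 0 < w := Real.sqrt_pos.mpr (by linarith)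
  have hw3 : 0 < w ^ 3 + Jv := by
    have h6 : (w ^ 3) ^ 2 > Jv ^ 2 := by
      have : (w ^ 3) ^ 2 = (Iv / 3) ^ 3 := by
        have : (w ^ 3) ^ 2 = (w ^ 2) ^ 3 := by ring
        rw [this, hw2]
      nlinarith
    nlinarith [pow_pos hwpos 3]
  set s : ℝ := H - w with hsdef
  set A : ℝ := 4 * H + 2 * w with hAdef
  have hApos : 0 < A := by rw [hAdef]; linarith
  set C : ℝ := r - s ^ 2 with hCdef
  -- key: A * C - 4 * G^2 = 4 * (Jv + w^3)
  have hkey : A * C - 4 * G ^ 2 = 4 * (Jv + w ^ 3) := by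
    rw [hAdef, hCdef, hsdef, hJr]
    have hw2' : w ^ 2 = H ^ 2 + r / 3 := by rw [hw2, hIr]; ring
    linear_combination (-6 * w) * hw2'
  clear_value w s A C
  have hACG : 0 < A * C - 4 * G ^ 2 := by rw [hkey]; linarith
  -- quadratic A z^2 + 4 G z + C > 0 for all z
  have hquad : ∀ z : ℝ, 0 < A * z ^ 2 + 4 * G * z + C := by
    clear hΔ hΔ' hHdef hGdef hrdef hIdef hJdef hIr hJr hkey hw2 hw3 hIpos
    intro z
    nlinarith [sq_nonneg (A * z + 2 * G), hACG, hApos]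
  set z : ℝ := a0 * t + a1 with hzdef
  have hfg : a0 ^ 3 * (a0 * t ^ 4 + 4 * a1 * t ^ 3 + 6 * a2 * t ^ 2 + 4 * a3 * t + a4)
      = (z ^ 2 + s) ^ 2 + (A * z ^ 2 + 4 * G * z + C) := by
    rw [hzdef, hCdef, hAdef, hsdef, hrdef, hGdef, hHdef]
    ring
  have hpos : 0 < a0 ^ 3 * (a0 * t ^ 4 + 4 * a1 * t ^ 3 + 6 * a2 * t ^ 2 + 4 * a3 * t + a4) := by
    rw [hfg]
    exact add_pos_of_nonneg_of_pos (sq_nonneg _) (hquad z)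
  have ha03 : (0:ℝ) < a0 ^ 3 := by positivity
  have h2 := mul_pos (inv_pos.mpr ha03) hpos
  rwa [inv_mul_cancel_left₀ ha03.ne'] at h2
end

section
/- Let g(t) = at⁴ + bt³ + ct² + dt + e with a > 0 and e > 0, and set α = b a^(−3/4) e^(−1/4), β = c a^(−1/2) e^(−1/2), γ = d a^(−1/4) e^(−3/4). If β ≤ 6, α > −(β+2)/2 and γ > −(β+2)/2, then g(t) ≥ 0 for all t > 0. -/
lemma quartic_key (α β γ s : ℝ) (hs : 0 < s) (hβ : β ≤ 6)
    (hα : -((β + 2) / 2) ≤ α) (hγ : -((β + 2) / 2) ≤ γ) :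
    0 ≤ s ^ 4 + α * s ^ 3 + β * s ^ 2 + γ * s + 1 := by
  have h1 : 0 ≤ (α + (β + 2) / 2) * s ^ 3 :=
    mul_nonneg (by linarith) (by positivity)
  have h2 : 0 ≤ (γ + (β + 2) / 2) * s := mul_nonneg (by linarith) hs.le
  have h3 : 0 ≤ (s - 1) ^ 4 := by positivity
  have h4 : 0 ≤ ((6 - β) / 2) * s * (s - 1) ^ 2 :=
    mul_nonneg (mul_nonneg (by linarith) hs.le) (sq_nonneg _)
  have hid : s ^ 4 + α * s ^ 3 + β * s ^ 2 + γ * s + 1 =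
      (α + (β + 2) / 2) * s ^ 3 + (γ + (β + 2) / 2) * s + (s - 1) ^ 4
        + ((6 - β) / 2) * s * (s - 1) ^ 2 := by ring
  linarith [hid ▸ (by linarith : (0:ℝ) ≤ (α + (β + 2) / 2) * s ^ 3
    + (γ + (β + 2) / 2) * s + (s - 1) ^ 4 + ((6 - β) / 2) * s * (s - 1) ^ 2)]

theorem quartic_nonneg_on_pos_of_beta_le_six (a b c d e : ℝ) (ha : 0 < a) (he : 0 < e)
    (hβ : c * a ^ (-(1:ℝ)/2) * e ^ (-(1:ℝ)/2) ≤ 6)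
    (hα : -((c * a ^ (-(1:ℝ)/2) * e ^ (-(1:ℝ)/2) + 2) / 2)
        < b * a ^ (-(3:ℝ)/4) * e ^ (-(1:ℝ)/4))
    (hγ : -((c * a ^ (-(1:ℝ)/2) * e ^ (-(1:ℝ)/2) + 2) / 2)
        < d * a ^ (-(1:ℝ)/4) * e ^ (-(3:ℝ)/4)) :
    ∀ t : ℝ, 0 < t → 0 ≤ a * t ^ 4 + b * t ^ 3 + c * t ^ 2 + d * t + e := by
  set u := a ^ ((1:ℝ)/4) with hu_def
  set v := e ^ ((1:ℝ)/4) with hv_def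
  have hu : 0 < u := Real.rpow_pos_of_pos ha _
  have hv : 0 < v := Real.rpow_pos_of_pos he _
  have hu4 : u ^ 4 = a := by
    rw [hu_def, ← Real.rpow_natCast (a ^ ((1:ℝ)/4)) 4, ← Real.rpow_mul ha.le]
    norm_num
  have hv4 : v ^ 4 = e := by
    rw [hv_def, ← Real.rpow_natCast (e ^ ((1:ℝ)/4)) 4, ← Real.rpow_mul he.le]
    norm_num
  have hu3 : u ^ 3 = a ^ ((3:ℝ)/4) := by
    rw [hu_def, ← Real.rpow_natCast (a ^ ((1:ℝ)/4)) 3, ← Real.rpow_mul ha.le]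
    norm_num
  have hu2 : u ^ 2 = a ^ ((1:ℝ)/2) := by
    rw [hu_def, ← Real.rpow_natCast (a ^ ((1:ℝ)/4)) 2, ← Real.rpow_mul ha.le]
    norm_num
  have hv3 : v ^ 3 = e ^ ((3:ℝ)/4) := by
    rw [hv_def, ← Real.rpow_natCast (e ^ ((1:ℝ)/4)) 3, ← Real.rpow_mul he.le]
    norm_num
  have hv2 : v ^ 2 = e ^ ((1:ℝ)/2) := by
    rw [hv_def, ← Real.rpow_natCast (e ^ ((1:ℝ)/4)) 2, ← Real.rpow_mul he.le]
    norm_num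
  have ha34 : a ^ (-(3:ℝ)/4) = (u ^ 3)⁻¹ := by
    rw [hu3, ← Real.rpow_neg ha.le]; norm_num
  have ha12 : a ^ (-(1:ℝ)/2) = (u ^ 2)⁻¹ := by
    rw [hu2, ← Real.rpow_neg ha.le]; norm_num
  have ha14 : a ^ (-(1:ℝ)/4) = u⁻¹ := by
    rw [hu_def, ← Real.rpow_neg ha.le]; norm_num
  have he34 : e ^ (-(3:ℝ)/4) = (v ^ 3)⁻¹ := by
    rw [hv3, ← Real.rpow_neg he.le]; norm_num
  have he12 : e ^ (-(1:ℝ)/2) = (v ^ 2)⁻¹ := by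
    rw [hv2, ← Real.rpow_neg he.le]; norm_num
  have he14 : e ^ (-(1:ℝ)/4) = v⁻¹ := by
    rw [hv_def, ← Real.rpow_neg he.le]; norm_num
  rw [ha12, he12] at hβ
  rw [ha12, he12, ha34, he14] at hα
  rw [ha12, he12, ha14, he34] at hγ
  intro t ht
  set s := u * t / v with hs_def
  have hs : 0 < s := by positivity
  have hβ' : c * (u ^ 2)⁻¹ * (v ^ 2)⁻¹ ≤ 6 := hβ
  have key := quartic_key (b * (u ^ 3)⁻¹ * v⁻¹) (c * (u ^ 2)⁻¹ * (v ^ 2)⁻¹)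
    (d * u⁻¹ * (v ^ 3)⁻¹) s hs hβ' hα.le hγ.le
  have hid : a * t ^ 4 + b * t ^ 3 + c * t ^ 2 + d * t + e =
      v ^ 4 * (s ^ 4 + (b * (u ^ 3)⁻¹ * v⁻¹) * s ^ 3
        + (c * (u ^ 2)⁻¹ * (v ^ 2)⁻¹) * s ^ 2 + (d * u⁻¹ * (v ^ 3)⁻¹) * s + 1) := by
    rw [hs_def, ← hu4, ← hv4]
    field_simp
  rw [hid]
  exact mul_nonneg (by positivity) key
end

section
/- Let g(t) = at⁴ + bt³ + ct² + dt + e with a > 0 and e > 0, and set α = b a^(−3/4) e^(−1/4), β = c a^(−1/2) e^(−1/2), γ = d a^(−1/4) e^(−3/4). If β > 6, α > −2√(β−2) and γ > −2√(β−2), then g(t) ≥ 0 for all t > 0. -/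
lemma rpow_q (a : ℝ) (ha : 0 < a) (n : ℕ) :
    a ^ (-(n:ℝ)/4) = ((a ^ ((1:ℝ)/4)) ^ n)⁻¹ := by
  rw [← Real.rpow_natCast (a ^ ((1:ℝ)/4)) n, ← Real.rpow_mul ha.le, ← Real.rpow_neg ha.le]
  congr 1
  ring

lemma aux_norm (α β γ s : ℝ) (hs : 0 < s) (hβ : 6 < β)
    (hα : -(2 * Real.sqrt (β - 2)) < α) (hγ : -(2 * Real.sqrt (β - 2)) < γ) :
    0 ≤ s^4 + α*s^3 + β*s^2 + γ*s + 1 := by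
  set q := Real.sqrt (β - 2) with hq
  have hq2 : q^2 = β - 2 := Real.sq_sqrt (by linarith)
  have h1 : 0 ≤ (α + 2*q) * s^3 := mul_nonneg (by linarith) (by positivity)
  have h2 : 0 ≤ (γ + 2*q) * s := mul_nonneg (by linarith) hs.le
  nlinarith [sq_nonneg (s^2 - q*s + 1)]

theorem quartic_nonneg_on_pos_of_beta_gt_six (a b c d e : ℝ) (ha : 0 < a) (he : 0 < e)
    (hβ : 6 < c * a ^ (-(1:ℝ)/2) * e ^ (-(1:ℝ)/2))
    (hα : -(2 * Real.sqrt (c * a ^ (-(1:ℝ)/2) * e ^ (-(1:ℝ)/2) - 2))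
        < b * a ^ (-(3:ℝ)/4) * e ^ (-(1:ℝ)/4))
    (hγ : -(2 * Real.sqrt (c * a ^ (-(1:ℝ)/2) * e ^ (-(1:ℝ)/2) - 2))
        < d * a ^ (-(1:ℝ)/4) * e ^ (-(3:ℝ)/4)) :
    ∀ t : ℝ, 0 < t → 0 ≤ a * t ^ 4 + b * t ^ 3 + c * t ^ 2 + d * t + e := by
  intro t ht
  set A := a ^ ((1:ℝ)/4) with hAdef
  set E := e ^ ((1:ℝ)/4) with hEdef
  have hA : 0 < A := Real.rpow_pos_of_pos ha _
  have hE : 0 < E := Real.rpow_pos_of_pos he _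
  have hA4 : A ^ 4 = a := by
    rw [hAdef, ← Real.rpow_natCast (a ^ ((1:ℝ)/4)) 4, ← Real.rpow_mul ha.le]
    norm_num
  have hE4 : E ^ 4 = e := by
    rw [hEdef, ← Real.rpow_natCast (e ^ ((1:ℝ)/4)) 4, ← Real.rpow_mul he.le]
    norm_num
  have ea2 : a ^ (-(1:ℝ)/2) = (A ^ 2)⁻¹ := by
    rw [show (-(1:ℝ)/2) = -((2:ℕ):ℝ)/4 by norm_num]; exact rpow_q a ha 2
  have ee2 : e ^ (-(1:ℝ)/2) = (E ^ 2)⁻¹ := by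
    rw [show (-(1:ℝ)/2) = -((2:ℕ):ℝ)/4 by norm_num]; exact rpow_q e he 2
  have ea3 : a ^ (-(3:ℝ)/4) = (A ^ 3)⁻¹ := by
    rw [show (-(3:ℝ)/4) = -((3:ℕ):ℝ)/4 by norm_num]; exact rpow_q a ha 3
  have ee3 : e ^ (-(3:ℝ)/4) = (E ^ 3)⁻¹ := by
    rw [show (-(3:ℝ)/4) = -((3:ℕ):ℝ)/4 by norm_num]; exact rpow_q e he 3
  have ea1 : a ^ (-(1:ℝ)/4) = A⁻¹ := by
    rw [show (-(1:ℝ)/4) = -((1:ℕ):ℝ)/4 by norm_num]; rw [rpow_q a ha 1, pow_one]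
  have ee1 : e ^ (-(1:ℝ)/4) = E⁻¹ := by
    rw [show (-(1:ℝ)/4) = -((1:ℕ):ℝ)/4 by norm_num]; rw [rpow_q e he 1, pow_one]
  rw [ea2, ee2, ea3, ee1] at hα
  rw [ea2, ee2] at hβ
  rw [ea2, ee2, ea1, ee3] at hγ
  set s := t * A / E with hsdef
  have hs : 0 < s := by positivity
  have key := aux_norm (b * (A^3)⁻¹ * E⁻¹) (c * (A^2)⁻¹ * (E^2)⁻¹) (d * A⁻¹ * (E^3)⁻¹) s hs hβ hα hγ
  have heq : a * t ^ 4 + b * t ^ 3 + c * t ^ 2 + d * t + e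
      = e * (s^4 + (b * (A^3)⁻¹ * E⁻¹)*s^3 + (c * (A^2)⁻¹ * (E^2)⁻¹)*s^2
          + (d * A⁻¹ * (E^3)⁻¹)*s + 1) := by
    rw [hsdef, ← hA4, ← hE4]
    field_simp
  rw [heq]
  positivity
end

section
/- Let A be a 4th order 2-dimensional symmetric tensor with a₁₁₁₁ > 0 and a₂₂₂₂ > 0. If a₁₂₂₁ ≤ √(a₁₁₁₁ a₂₂₂₂), 4a₁₂₁₁·(a₂₂₂₂)^(1/4) + (a₁₁₁₁)^(1/4)·(3a₁₂₂₁ + √(a₁₁₁₁ a₂₂₂₂)) > 0, and 4a₁₂₂₂·(a₁₁₁₁)^(1/4) + (a₂₂₂₂)^(1/4)·(3a₁₂₂₁ + √(a₁₁₁₁ a₂₂₂₂)) > 0, then A is copositive. -/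
theorem copositive_dim2_case1 (a1111 a1211 a1221 a1222 a2222 : ℝ)
    (h1 : 0 < a1111) (h2 : 0 < a2222)
    (hc1 : a1221 ≤ Real.sqrt (a1111 * a2222))
    (hc2 : 0 < 4 * a1211 * a2222 ^ ((1:ℝ)/4)
        + a1111 ^ ((1:ℝ)/4) * (3 * a1221 + Real.sqrt (a1111 * a2222)))
    (hc3 : 0 < 4 * a1222 * a1111 ^ ((1:ℝ)/4)
        + a2222 ^ ((1:ℝ)/4) * (3 * a1221 + Real.sqrt (a1111 * a2222))) :
    ∀ x1 x2 : ℝ, 0 ≤ x1 → 0 ≤ x2 →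
      0 ≤ a1111 * x1 ^ 4 + 4 * a1211 * x1 ^ 3 * x2 + 6 * a1221 * x1 ^ 2 * x2 ^ 2
          + 4 * a1222 * x1 * x2 ^ 3 + a2222 * x2 ^ 4 := by
  intro x1 x2 hx1 hx2
  set α := a1111 ^ ((1:ℝ)/4) with hαdef
  set β := a2222 ^ ((1:ℝ)/4) with hβdef
  have hα : 0 < α := Real.rpow_pos_of_pos h1 _
  have hβ : 0 < β := Real.rpow_pos_of_pos h2 _
  have hα4 : α ^ 4 = a1111 := by
    rw [hαdef, ← Real.rpow_natCast (a1111 ^ ((1:ℝ)/4)) 4, ← Real.rpow_mul h1.le]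
    norm_num
  have hβ4 : β ^ 4 = a2222 := by
    rw [hβdef, ← Real.rpow_natCast (a2222 ^ ((1:ℝ)/4)) 4, ← Real.rpow_mul h2.le]
    norm_num
  have hα2 : α ^ 2 = Real.sqrt a1111 := by
    rw [Real.sqrt_eq_rpow, hαdef, ← Real.rpow_natCast (a1111 ^ ((1:ℝ)/4)) 2,
      ← Real.rpow_mul h1.le]
    norm_num
  have hβ2 : β ^ 2 = Real.sqrt a2222 := by
    rw [Real.sqrt_eq_rpow, hβdef, ← Real.rpow_natCast (a2222 ^ ((1:ℝ)/4)) 2,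
      ← Real.rpow_mul h2.le]
    norm_num
  have hsqrt : Real.sqrt (a1111 * a2222) = α ^ 2 * β ^ 2 := by
    rw [Real.sqrt_mul h1.le, ← hα2, ← hβ2]
  rw [hsqrt] at hc1 hc2 hc3
  have hE2 : 0 ≤ (4 * a1211 * β + α * (3 * a1221 + α ^ 2 * β ^ 2)) * x1 ^ 3 * x2 :=
    mul_nonneg (mul_nonneg hc2.le (pow_nonneg hx1 3)) hx2
  have hE3 : 0 ≤ (4 * a1222 * α + β * (3 * a1221 + α ^ 2 * β ^ 2)) * x1 * x2 ^ 3 :=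
    mul_nonneg (mul_nonneg hc3.le hx1) (pow_nonneg hx2 3)
  have hT1 : 0 ≤ (α ^ 2 * β ^ 2 - a1221) * (x1 * x2) * (α * x1 - β * x2) ^ 2 :=
    mul_nonneg (mul_nonneg (by linarith) (mul_nonneg hx1 hx2)) (sq_nonneg _)
  have hT0 : 0 ≤ α * β * (α * x1 - β * x2) ^ 4 := by positivity
  have key : 0 ≤ α * β * (a1111 * x1 ^ 4 + 4 * a1211 * x1 ^ 3 * x2
      + 6 * a1221 * x1 ^ 2 * x2 ^ 2 + 4 * a1222 * x1 * x2 ^ 3 + a2222 * x2 ^ 4) := by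
    have hid : α * β * (a1111 * x1 ^ 4 + 4 * a1211 * x1 ^ 3 * x2
        + 6 * a1221 * x1 ^ 2 * x2 ^ 2 + 4 * a1222 * x1 * x2 ^ 3 + a2222 * x2 ^ 4)
        = α * β * (α * x1 - β * x2) ^ 4
          + 3 * ((α ^ 2 * β ^ 2 - a1221) * (x1 * x2) * (α * x1 - β * x2) ^ 2)
          + α * ((4 * a1211 * β + α * (3 * a1221 + α ^ 2 * β ^ 2)) * x1 ^ 3 * x2)
          + β * ((4 * a1222 * α + β * (3 * a1221 + α ^ 2 * β ^ 2)) * x1 * x2 ^ 3) := by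
      rw [← hα4, ← hβ4]; ring
    rw [hid]
    have := mul_nonneg hα.le hE2
    have := mul_nonneg hβ.le hE3
    linarith
  have hαβ : 0 < α * β := mul_pos hα hβ
  nlinarith [key, hαβ]
end

section
/- Let A be a 4th order 2-dimensional symmetric tensor with a₁₁₁₁ > 0 and a₂₂₂₂ > 0. If a₁₂₂₁ > √(a₁₁₁₁ a₂₂₂₂), 2a₁₂₁₁ + √(6a₁₂₂₁a₁₁₁₁ − 2a₁₁₁₁√(a₁₁₁₁a₂₂₂₂)) > 0, and 2a₁₂₂₂ + √(6a₁₂₂₁a₂₂₂₂ − 2a₂₂₂₂√(a₁₁₁₁a₂₂₂₂)) > 0, then A is copositive. -/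
theorem copositive_dim2_case2 (a1111 a1211 a1221 a1222 a2222 : ℝ)
    (h1 : 0 < a1111) (h2 : 0 < a2222)
    (hc1 : Real.sqrt (a1111 * a2222) < a1221)
    (hc2 : 0 < 2 * a1211
        + Real.sqrt (6 * a1221 * a1111 - 2 * a1111 * Real.sqrt (a1111 * a2222)))
    (hc3 : 0 < 2 * a1222
        + Real.sqrt (6 * a1221 * a2222 - 2 * a2222 * Real.sqrt (a1111 * a2222))) :
    ∀ x1 x2 : ℝ, 0 ≤ x1 → 0 ≤ x2 →
      0 ≤ a1111 * x1 ^ 4 + 4 * a1211 * x1 ^ 3 * x2 + 6 * a1221 * x1 ^ 2 * x2 ^ 2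
          + 4 * a1222 * x1 * x2 ^ 3 + a2222 * x2 ^ 4 := by
  intro x1 x2 hx1 hx2
  set A := Real.sqrt a1111 with hA
  set E := Real.sqrt a2222 with hE
  have hA0 : 0 < A := Real.sqrt_pos.mpr h1
  have hE0 : 0 < E := Real.sqrt_pos.mpr h2
  have hA2 : A ^ 2 = a1111 := Real.sq_sqrt h1.le
  have hE2 : E ^ 2 = a2222 := Real.sq_sqrt h2.le
  have hS : Real.sqrt (a1111 * a2222) = A * E := Real.sqrt_mul h1.le _
  set M : ℝ := 6 * a1221 - 2 * (A * E) with hM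
  have hM0 : 0 < M := by
    rw [hS] at hc1
    nlinarith [mul_pos hA0 hE0]
  set R := Real.sqrt M with hR
  have hR0 : 0 ≤ R := Real.sqrt_nonneg M
  have hR2 : R ^ 2 = M := Real.sq_sqrt hM0.le
  have harg1 : 6 * a1221 * a1111 - 2 * a1111 * Real.sqrt (a1111 * a2222)
      = a1111 * M := by rw [hS, hM]; ring
  have harg2 : 6 * a1221 * a2222 - 2 * a2222 * Real.sqrt (a1111 * a2222)
      = a2222 * M := by rw [hS, hM]; ring
  have hb : 0 < 2 * a1211 + A * R := by
    rw [harg1, Real.sqrt_mul h1.le] at hc2; exact hc2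
  have hd : 0 < 2 * a1222 + E * R := by
    rw [harg2, Real.sqrt_mul h2.le] at hc3; exact hc3
  set p : ℝ := min (min (2 * a1211 / A) (2 * a1222 / E)) 0 with hp
  have hp0 : p ≤ 0 := min_le_right _ _
  have hpb : p * A ≤ 2 * a1211 := by
    have : p ≤ 2 * a1211 / A := le_trans (min_le_left _ _) (min_le_left _ _)
    calc p * A ≤ (2 * a1211 / A) * A := by nlinarith
    _ = 2 * a1211 := by field_simp
  have hpd : p * E ≤ 2 * a1222 := by
    have : p ≤ 2 * a1222 / E := le_trans (min_le_left _ _) (min_le_right _ _)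
    calc p * E ≤ (2 * a1222 / E) * E := by nlinarith
    _ = 2 * a1222 := by field_simp
  have hpR : -R ≤ p := by
    refine le_min (le_min ?_ ?_) (by linarith)
    · rw [le_div_iff₀ hA0]; nlinarith
    · rw [le_div_iff₀ hE0]; nlinarith
  clear_value p A E R M
  have hp2 : p ^ 2 ≤ M := by
    have := sq_le_sq' hpR (hp0.trans hR0)
    rwa [hR2] at this
  have key : a1111 * x1 ^ 4 + 4 * a1211 * x1 ^ 3 * x2 + 6 * a1221 * x1 ^ 2 * x2 ^ 2
        + 4 * a1222 * x1 * x2 ^ 3 + a2222 * x2 ^ 4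
      = (A * x1 ^ 2 + p * (x1 * x2) + E * x2 ^ 2) ^ 2
        + x1 * x2 * ((4 * a1211 - 2 * (p * A)) * x1 ^ 2 + (M - p ^ 2) * (x1 * x2)
            + (4 * a1222 - 2 * (p * E)) * x2 ^ 2) := by
    rw [hM]
    linear_combination x1 ^ 4 * hA2.symm + x2 ^ 4 * hE2.symm
  rw [key]
  have hq : 0 ≤ (4 * a1211 - 2 * (p * A)) * x1 ^ 2 + (M - p ^ 2) * (x1 * x2)
      + (4 * a1222 - 2 * (p * E)) * x2 ^ 2 := by
    have h12 : 0 ≤ x1 * x2 := mul_nonneg hx1 hx2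
    refine add_nonneg (add_nonneg ?_ ?_) ?_
    · exact mul_nonneg (by linarith) (sq_nonneg x1)
    · exact mul_nonneg (by linarith) h12
    · exact mul_nonneg (by linarith) (sq_nonneg x2)
  positivity
end

section
/- Let A be a 4th order 2-dimensional symmetric tensor. If a₁₁₁₁ ≥ 0, a₂₂₂₂ ≥ 0, a₁₁₁₂ ≥ 0, a₂₂₂₁ ≥ 0, and 3a₁₂₂₁ + √(a₁₁₁₁a₂₂₂₂) + 4√(a₁₁₁₂a₂₂₂₁) ≥ 0, then A is copositive; if all these inequalities are strict, A is strictly copositive. -/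
theorem copositive_dim2_sufficient (a1111 a1112 a1221 a2221 a2222 : ℝ) :
    ((0 ≤ a1111 ∧ 0 ≤ a2222 ∧ 0 ≤ a1112 ∧ 0 ≤ a2221 ∧
        0 ≤ 3 * a1221 + Real.sqrt (a1111 * a2222) + 4 * Real.sqrt (a1112 * a2221)) →
      ∀ x1 x2 : ℝ, 0 ≤ x1 → 0 ≤ x2 →
        0 ≤ a1111 * x1 ^ 4 + 4 * a1112 * x1 ^ 3 * x2 + 6 * a1221 * x1 ^ 2 * x2 ^ 2
            + 4 * a2221 * x1 * x2 ^ 3 + a2222 * x2 ^ 4) ∧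
    ((0 < a1111 ∧ 0 < a2222 ∧ 0 < a1112 ∧ 0 < a2221 ∧
        0 < 3 * a1221 + Real.sqrt (a1111 * a2222) + 4 * Real.sqrt (a1112 * a2221)) →
      ∀ x1 x2 : ℝ, 0 ≤ x1 → 0 ≤ x2 → ¬(x1 = 0 ∧ x2 = 0) →
        0 < a1111 * x1 ^ 4 + 4 * a1112 * x1 ^ 3 * x2 + 6 * a1221 * x1 ^ 2 * x2 ^ 2
            + 4 * a2221 * x1 * x2 ^ 3 + a2222 * x2 ^ 4) := by
  constructor
  · rintro ⟨h1, h2, h3, h4, h5⟩ x1 x2 hx1 hx2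
    set s1 := Real.sqrt a1111 with hs1
    set s4 := Real.sqrt a2222 with hs4
    set s2 := Real.sqrt a1112 with hs2
    set s3 := Real.sqrt a2221 with hs3
    have e1 : s1 ^ 2 = a1111 := Real.sq_sqrt h1
    have e4 : s4 ^ 2 = a2222 := Real.sq_sqrt h2
    have e2 : s2 ^ 2 = a1112 := Real.sq_sqrt h3
    have e3 : s3 ^ 2 = a2221 := Real.sq_sqrt h4
    have m1 : Real.sqrt (a1111 * a2222) = s1 * s4 := Real.sqrt_mul h1 _
    have m2 : Real.sqrt (a1112 * a2221) = s2 * s3 := Real.sqrt_mul h3 _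
    rw [m1, m2] at h5
    have key : a1111 * x1 ^ 4 + 4 * a1112 * x1 ^ 3 * x2 + 6 * a1221 * x1 ^ 2 * x2 ^ 2
        + 4 * a2221 * x1 * x2 ^ 3 + a2222 * x2 ^ 4
        = (s1 * x1 ^ 2 - s4 * x2 ^ 2) ^ 2
          + 4 * (x1 * x2) * (s2 * x1 - s3 * x2) ^ 2
          + 2 * (3 * a1221 + s1 * s4 + 4 * (s2 * s3)) * (x1 * x2) ^ 2 := by
      rw [← e1, ← e2, ← e3, ← e4]; ring
    rw [key]
    have t1 := sq_nonneg (s1 * x1 ^ 2 - s4 * x2 ^ 2)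
    have t2 := mul_nonneg (mul_nonneg hx1 hx2) (sq_nonneg (s2 * x1 - s3 * x2))
    have t3 := mul_nonneg h5 (sq_nonneg (x1 * x2))
    linarith
  · rintro ⟨h1, h2, h3, h4, h5⟩ x1 x2 hx1 hx2 hne
    set s1 := Real.sqrt a1111 with hs1
    set s4 := Real.sqrt a2222 with hs4
    set s2 := Real.sqrt a1112 with hs2
    set s3 := Real.sqrt a2221 with hs3
    have e1 : s1 ^ 2 = a1111 := Real.sq_sqrt h1.le
    have e4 : s4 ^ 2 = a2222 := Real.sq_sqrt h2.le
    have e2 : s2 ^ 2 = a1112 := Real.sq_sqrt h3.le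
    have e3 : s3 ^ 2 = a2221 := Real.sq_sqrt h4.le
    have m1 : Real.sqrt (a1111 * a2222) = s1 * s4 := Real.sqrt_mul h1.le _
    have m2 : Real.sqrt (a1112 * a2221) = s2 * s3 := Real.sqrt_mul h3.le _
    rw [m1, m2] at h5
    have key : a1111 * x1 ^ 4 + 4 * a1112 * x1 ^ 3 * x2 + 6 * a1221 * x1 ^ 2 * x2 ^ 2
        + 4 * a2221 * x1 * x2 ^ 3 + a2222 * x2 ^ 4
        = (s1 * x1 ^ 2 - s4 * x2 ^ 2) ^ 2
          + 4 * (x1 * x2) * (s2 * x1 - s3 * x2) ^ 2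
          + 2 * (3 * a1221 + s1 * s4 + 4 * (s2 * s3)) * (x1 * x2) ^ 2 := by
      rw [← e1, ← e2, ← e3, ← e4]; ring
    rw [key]
    rcases eq_or_lt_of_le hx1 with hx1' | hx1'
    · have hx2' : 0 < x2 := lt_of_le_of_ne hx2 fun h => hne ⟨hx1'.symm, h.symm⟩
      have hs4pos : 0 < s4 := Real.sqrt_pos.mpr h2
      rw [← hx1']
      have heq : (s1 * 0 ^ 2 - s4 * x2 ^ 2) ^ 2 = a2222 * x2 ^ 4 := by
        rw [← e4]; ring
      have : 0 < (s1 * 0 ^ 2 - s4 * x2 ^ 2) ^ 2 := by rw [heq]; positivity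
      nlinarith [sq_nonneg (s2 * 0 - s3 * x2)]
    rcases eq_or_lt_of_le hx2 with hx2' | hx2'
    · have hs1pos : 0 < s1 := Real.sqrt_pos.mpr h1
      rw [← hx2']
      have heq : (s1 * x1 ^ 2 - s4 * 0 ^ 2) ^ 2 = a1111 * x1 ^ 4 := by
        rw [← e1]; ring
      have : 0 < (s1 * x1 ^ 2 - s4 * 0 ^ 2) ^ 2 := by rw [heq]; positivity
      nlinarith [sq_nonneg (s2 * x1 - s3 * 0)]
    have t1 := sq_nonneg (s1 * x1 ^ 2 - s4 * x2 ^ 2)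
    have t2 := mul_nonneg (mul_nonneg hx1 hx2) (sq_nonneg (s2 * x1 - s3 * x2))
    have t3 := mul_pos h5 (pow_pos (mul_pos hx1' hx2') 2)
    linarith
end

section
/- Let A be a 4th order 2-dimensional symmetric tensor. If a₁₁₁₁ ≥ 0, a₂₂₂₂ ≥ 0, a₁₁₁₂ + (a₁₁₁₁³ a₂₂₂₂)^(1/4) ≥ 0, a₂₂₂₁ + (a₁₁₁₁ a₂₂₂₂³)^(1/4) ≥ 0, and 3(a₁₂₂₁ − √(a₁₁₁₁a₂₂₂₂)) + 4√((a₁₁₁₂ + (a₁₁₁₁³a₂₂₂₂)^(1/4))(a₂₂₂₁ + (a₁₁₁₁a₂₂₂₂³)^(1/4))) ≥ 0, then A is copositive; with strict inequalities, A is strictly copositive. -/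
private lemma rpow4 (a : ℝ) (ha : 0 ≤ a) : (a ^ ((1:ℝ)/4)) ^ 4 = a := by
  rw [← Real.rpow_natCast (a ^ ((1:ℝ)/4)) 4, ← Real.rpow_mul ha]
  norm_num

private lemma rpow34 (a b : ℝ) (ha : 0 ≤ a) (hb : 0 ≤ b) :
    (a ^ 3 * b) ^ ((1:ℝ)/4) = (a ^ ((1:ℝ)/4)) ^ 3 * b ^ ((1:ℝ)/4) := by
  rw [Real.mul_rpow (by positivity) hb, ← Real.rpow_natCast a 3, ← Real.rpow_mul ha,
    ← Real.rpow_natCast (a ^ ((1:ℝ)/4)) 3, ← Real.rpow_mul ha]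
  norm_num

private lemma rpow13 (a b : ℝ) (ha : 0 ≤ a) (hb : 0 ≤ b) :
    (a * b ^ 3) ^ ((1:ℝ)/4) = a ^ ((1:ℝ)/4) * (b ^ ((1:ℝ)/4)) ^ 3 := by
  rw [Real.mul_rpow ha (by positivity), ← Real.rpow_natCast b 3, ← Real.rpow_mul hb,
    ← Real.rpow_natCast (b ^ ((1:ℝ)/4)) 3, ← Real.rpow_mul hb]
  norm_num

private lemma sqrt22 (a b : ℝ) (ha : 0 ≤ a) (hb : 0 ≤ b) :
    Real.sqrt (a * b) = (a ^ ((1:ℝ)/4)) ^ 2 * (b ^ ((1:ℝ)/4)) ^ 2 := by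
  rw [Real.sqrt_mul ha, Real.sqrt_eq_rpow, Real.sqrt_eq_rpow,
    ← Real.rpow_natCast (a ^ ((1:ℝ)/4)) 2, ← Real.rpow_mul ha,
    ← Real.rpow_natCast (b ^ ((1:ℝ)/4)) 2, ← Real.rpow_mul hb]
  norm_num

private lemma decomp (a1111 a1112 a1221 a2221 a2222 x1 x2 : ℝ)
    (h1 : 0 ≤ a1111) (h2 : 0 ≤ a2222)
    (h3 : 0 ≤ a1112 + (a1111 ^ 3 * a2222) ^ ((1:ℝ)/4))
    (h4 : 0 ≤ a2221 + (a1111 * a2222 ^ 3) ^ ((1:ℝ)/4)) :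
    a1111 * x1 ^ 4 + 4 * a1112 * x1 ^ 3 * x2 + 6 * a1221 * x1 ^ 2 * x2 ^ 2
      + 4 * a2221 * x1 * x2 ^ 3 + a2222 * x2 ^ 4
    = (a1111 ^ ((1:ℝ)/4) * x1 - a2222 ^ ((1:ℝ)/4) * x2) ^ 4
      + 4 * x1 * x2 * (Real.sqrt (a1112 + (a1111 ^ 3 * a2222) ^ ((1:ℝ)/4)) * x1
          - Real.sqrt (a2221 + (a1111 * a2222 ^ 3) ^ ((1:ℝ)/4)) * x2) ^ 2
      + 2 * (3 * (a1221 - Real.sqrt (a1111 * a2222))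
          + 4 * Real.sqrt ((a1112 + (a1111 ^ 3 * a2222) ^ ((1:ℝ)/4))
              * (a2221 + (a1111 * a2222 ^ 3) ^ ((1:ℝ)/4)))) * x1 ^ 2 * x2 ^ 2 := by
  set α := a1111 ^ ((1:ℝ)/4) with hα
  set δ := a2222 ^ ((1:ℝ)/4) with hδ
  have hα4 : α ^ 4 = a1111 := rpow4 a1111 h1
  have hδ4 : δ ^ 4 = a2222 := rpow4 a2222 h2
  rw [rpow34 a1111 a2222 h1 h2] at h3 ⊢
  rw [rpow13 a1111 a2222 h1 h2] at h4 ⊢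
  rw [Real.sqrt_mul h3, sqrt22 a1111 a2222 h1 h2]
  set u := Real.sqrt (a1112 + α ^ 3 * δ) with huu
  set v := Real.sqrt (a2221 + α * δ ^ 3) with hvv
  have hu2 : u ^ 2 = a1112 + α ^ 3 * δ := Real.sq_sqrt h3
  have hv2 : v ^ 2 = a2221 + α * δ ^ 3 := Real.sq_sqrt h4
  linear_combination (-(x1^4))*hα4 - x2^4*hδ4 - 4*x1^3*x2*hu2 - 4*x1*x2^3*hv2

theorem copositive_dim2_sufficient' (a1111 a1112 a1221 a2221 a2222 : ℝ) :
    ((0 ≤ a1111 ∧ 0 ≤ a2222 ∧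
        0 ≤ a1112 + (a1111 ^ 3 * a2222) ^ ((1:ℝ)/4) ∧
        0 ≤ a2221 + (a1111 * a2222 ^ 3) ^ ((1:ℝ)/4) ∧
        0 ≤ 3 * (a1221 - Real.sqrt (a1111 * a2222))
            + 4 * Real.sqrt ((a1112 + (a1111 ^ 3 * a2222) ^ ((1:ℝ)/4))
                * (a2221 + (a1111 * a2222 ^ 3) ^ ((1:ℝ)/4)))) →
      ∀ x1 x2 : ℝ, 0 ≤ x1 → 0 ≤ x2 →
        0 ≤ a1111 * x1 ^ 4 + 4 * a1112 * x1 ^ 3 * x2 + 6 * a1221 * x1 ^ 2 * x2 ^ 2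
            + 4 * a2221 * x1 * x2 ^ 3 + a2222 * x2 ^ 4) ∧
    ((0 < a1111 ∧ 0 < a2222 ∧
        0 < a1112 + (a1111 ^ 3 * a2222) ^ ((1:ℝ)/4) ∧
        0 < a2221 + (a1111 * a2222 ^ 3) ^ ((1:ℝ)/4) ∧
        0 < 3 * (a1221 - Real.sqrt (a1111 * a2222))
            + 4 * Real.sqrt ((a1112 + (a1111 ^ 3 * a2222) ^ ((1:ℝ)/4))
                * (a2221 + (a1111 * a2222 ^ 3) ^ ((1:ℝ)/4)))) →
      ∀ x1 x2 : ℝ, 0 ≤ x1 → 0 ≤ x2 → ¬(x1 = 0 ∧ x2 = 0) →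
        0 < a1111 * x1 ^ 4 + 4 * a1112 * x1 ^ 3 * x2 + 6 * a1221 * x1 ^ 2 * x2 ^ 2
            + 4 * a2221 * x1 * x2 ^ 3 + a2222 * x2 ^ 4) := by
  constructor
  · rintro ⟨h1, h2, h3, h4, h5⟩ x1 x2 hx1 hx2
    rw [decomp a1111 a1112 a1221 a2221 a2222 x1 x2 h1 h2 h3 h4]
    have t1 : (0:ℝ) ≤ (a1111 ^ ((1:ℝ)/4) * x1 - a2222 ^ ((1:ℝ)/4) * x2) ^ 4 := by positivity
    have t2 : (0:ℝ) ≤ 4 * x1 * x2 * (Real.sqrt (a1112 + (a1111 ^ 3 * a2222) ^ ((1:ℝ)/4)) * x1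
          - Real.sqrt (a2221 + (a1111 * a2222 ^ 3) ^ ((1:ℝ)/4)) * x2) ^ 2 := by positivity
    nlinarith [mul_nonneg (mul_nonneg (mul_nonneg (by norm_num : (0:ℝ) ≤ 2) h5)
      (sq_nonneg x1)) (sq_nonneg x2)]
  · rintro ⟨h1, h2, h3, h4, h5⟩ x1 x2 hx1 hx2 hne
    rcases eq_or_lt_of_le hx1 with hx1' | hx1'
    · rcases eq_or_lt_of_le hx2 with hx2' | hx2'
      · exact absurd ⟨hx1'.symm, hx2'.symm⟩ hne
      · have : a1111 * x1 ^ 4 + 4 * a1112 * x1 ^ 3 * x2 + 6 * a1221 * x1 ^ 2 * x2 ^ 2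
            + 4 * a2221 * x1 * x2 ^ 3 + a2222 * x2 ^ 4 = a2222 * x2 ^ 4 := by
          rw [← hx1']; ring
        rw [this]; positivity
    · rcases eq_or_lt_of_le hx2 with hx2' | hx2'
      · have : a1111 * x1 ^ 4 + 4 * a1112 * x1 ^ 3 * x2 + 6 * a1221 * x1 ^ 2 * x2 ^ 2
            + 4 * a2221 * x1 * x2 ^ 3 + a2222 * x2 ^ 4 = a1111 * x1 ^ 4 := by
          rw [← hx2']; ring
        rw [this]; positivity
      · rw [decomp a1111 a1112 a1221 a2221 a2222 x1 x2 h1.le h2.le h3.le h4.le]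
        have t1 : (0:ℝ) ≤ (a1111 ^ ((1:ℝ)/4) * x1 - a2222 ^ ((1:ℝ)/4) * x2) ^ 4 := by positivity
        have t2 : (0:ℝ) ≤ 4 * x1 * x2 * (Real.sqrt (a1112 + (a1111 ^ 3 * a2222) ^ ((1:ℝ)/4)) * x1
              - Real.sqrt (a2221 + (a1111 * a2222 ^ 3) ^ ((1:ℝ)/4)) * x2) ^ 2 := by positivity
        nlinarith [mul_pos (mul_pos (mul_pos (by norm_num : (0:ℝ) < 2) h5)
          (pow_pos hx1' 2)) (pow_pos hx2' 2)]
end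

section
/- If A is a strictly copositive 4th order 2-dimensional symmetric tensor, then 2a₁₁₁₂√(a₂₂₂₂) + (3a₁₂₂₁ + √(a₁₁₁₁a₂₂₂₂))·(a₁₁₁₁a₂₂₂₂)^(1/4) + 2a₁₂₂₂√(a₁₁₁₁) > 0. -/
theorem strictly_copositive_necessary (a1111 a1112 a1221 a1222 a2222 : ℝ)
    (h : ∀ x1 x2 : ℝ, 0 ≤ x1 → 0 ≤ x2 → ¬(x1 = 0 ∧ x2 = 0) →
      0 < a1111 * x1 ^ 4 + 4 * a1112 * x1 ^ 3 * x2 + 6 * a1221 * x1 ^ 2 * x2 ^ 2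
          + 4 * a1222 * x1 * x2 ^ 3 + a2222 * x2 ^ 4) :
    0 < 2 * a1112 * Real.sqrt a2222
        + (3 * a1221 + Real.sqrt (a1111 * a2222)) * (a1111 * a2222) ^ ((1:ℝ)/4)
        + 2 * a1222 * Real.sqrt a1111 := by
  have h1 : 0 < a1111 := by
    have := h 1 0 zero_le_one le_rfl (by simp)
    nlinarith
  have h2 : 0 < a2222 := by
    have := h 0 1 le_rfl zero_le_one (by simp)
    nlinarith
  set s1 := Real.sqrt a1111 with hs1
  set s2 := Real.sqrt a2222 with hs2
  have hs1pos : 0 < s1 := Real.sqrt_pos.mpr h1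
  have hs2pos : 0 < s2 := Real.sqrt_pos.mpr h2
  set t1 := Real.sqrt s1 with ht1
  set t2 := Real.sqrt s2 with ht2
  have ht1pos : 0 < t1 := Real.sqrt_pos.mpr hs1pos
  have ht2pos : 0 < t2 := Real.sqrt_pos.mpr hs2pos
  have hs1sq : s1 ^ 2 = a1111 := Real.sq_sqrt h1.le
  have hs2sq : s2 ^ 2 = a2222 := Real.sq_sqrt h2.le
  have ht1sq : t1 ^ 2 = s1 := Real.sq_sqrt hs1pos.le
  have ht2sq : t2 ^ 2 = s2 := Real.sq_sqrt hs2pos.le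
  -- rewrite the rpow and the sqrt of the product
  have hm : Real.sqrt (a1111 * a2222) = s1 * s2 := Real.sqrt_mul h1.le _
  have hq : (a1111 * a2222) ^ ((1:ℝ)/4) = t1 * t2 := by
    have key : t1 * t2 = Real.sqrt (Real.sqrt (a1111 * a2222)) := by
      rw [ht1, ht2, ← Real.sqrt_mul hs1pos.le, hm]
    rw [key, Real.sqrt_eq_rpow, Real.sqrt_eq_rpow, ← Real.rpow_mul (by positivity)]
    norm_num
  rw [hm, hq]
  have hval := h t2 t1 ht2pos.le ht1pos.le (by
    intro ⟨hx, _⟩; exact ht2pos.ne' hx)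
  rw [← hs1sq, ← hs2sq] at hval
  rw [← ht1sq, ← ht2sq] at hval ⊢
  nlinarith [mul_pos ht1pos ht2pos, hval]
end

section
/- Let λ₁, λ₂, λ_S, λ₃, λ₄, λ_{S1}, λ_{S2}, μ be real numbers with μ ≥ 0 (μ = |λ_{S12}|ρ) such that λ₁ > 0, λ₂ > 0, λ_S > 0, λ₃ + λ₄ρ² > 0 (denote κ = λ₃ + λ₄ρ² > 0), λ_{S1} > 0, λ_{S2} > 0, −μ + √(2λ_{S1}λ_{S2}) > 0, and √(λ_Sλ_{S1}λ_{S2}) − μ√(λ_S) + √(2λ_S √(λ_{S1}λ_{S2})(−μ + √(2λ_{S1}λ_{S2}))) > 0. Then V(h₁,h₂,s) = λ₁h₁⁴ + λ₂h₂⁴ + κh₁²h₂² + λ_S s⁴ + λ_{S1}s²h₁² + λ_{S2}s²h₂² − μ s²h₁h₂ > 0 for all (h₁,h₂,s) ≥ 0 with (h₁,h₂,s) ≠ 0. -/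
theorem Z3_dark_matter_vacuum_stability (l1 l2 lS κ lS1 lS2 μ : ℝ)
    (hμ : 0 ≤ μ) (h1 : 0 < l1) (h2 : 0 < l2) (hS : 0 < lS) (hκ : 0 < κ)
    (hS1 : 0 < lS1) (hS2 : 0 < lS2)
    (h3 : 0 < -μ + Real.sqrt (2 * lS1 * lS2))
    (h4 : 0 < Real.sqrt (lS * lS1 * lS2) - μ * Real.sqrt lS
        + Real.sqrt (2 * lS * Real.sqrt (lS1 * lS2) * (-μ + Real.sqrt (2 * lS1 * lS2)))) :
    ∀ h1' h2' s : ℝ, 0 ≤ h1' → 0 ≤ h2' → 0 ≤ s → ¬(h1' = 0 ∧ h2' = 0 ∧ s = 0) →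
      0 < l1 * h1' ^ 4 + l2 * h2' ^ 4 + κ * h1' ^ 2 * h2' ^ 2 + lS * s ^ 4
          + lS1 * s ^ 2 * h1' ^ 2 + lS2 * s ^ 2 * h2' ^ 2 - μ * s ^ 2 * h1' * h2' := by
  have harg : (0:ℝ) ≤ 2 * lS1 * lS2 := by positivity
  have hμ2 : μ ^ 2 ≤ 2 * lS1 * lS2 := by
    have hlt : μ < Real.sqrt (2 * lS1 * lS2) := by linarith
    have := Real.sq_sqrt harg
    nlinarith [Real.sqrt_nonneg (2 * lS1 * lS2)]
  intro a b s ha hb hs hne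
  -- cross term bound: lS1 s²a² + lS2 s²b² ≥ μ s² a b
  have key : ∀ x y : ℝ, 0 ≤ x → 0 ≤ y → μ * x * y ≤ lS1 * x ^ 2 + lS2 * y ^ 2 := by
    intro x y hx hy
    nlinarith [sq_nonneg (lS1 * x ^ 2 - lS2 * y ^ 2), sq_nonneg (x * y),
      mul_nonneg (mul_nonneg hμ hx) hy, mul_nonneg (mul_nonneg hS1.le hx) hx,
      mul_nonneg (mul_nonneg hS2.le hy) hy,
      mul_le_mul_of_nonneg_right hμ2 (sq_nonneg (x * y))]
  have hcross : μ * s ^ 2 * a * b ≤ lS1 * s ^ 2 * a ^ 2 + lS2 * s ^ 2 * b ^ 2 := by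
    have := key (s * a) (s * b) (mul_nonneg hs ha) (mul_nonneg hs hb)
    nlinarith [this]
  rcases not_and_or.mp hne with h | h
  · have ha' : 0 < a := lt_of_le_of_ne ha (Ne.symm h)
    nlinarith [pow_pos ha' 4, mul_nonneg h2.le (pow_nonneg hb 4), mul_nonneg hS.le (pow_nonneg hs 4), mul_nonneg hκ.le (mul_nonneg (sq_nonneg a) (sq_nonneg b))]
  · rcases not_and_or.mp h with h | h
    · have hb' : 0 < b := lt_of_le_of_ne hb (Ne.symm h)
      nlinarith [pow_pos hb' 4, mul_nonneg h1.le (pow_nonneg ha 4), mul_nonneg hS.le (pow_nonneg hs 4), mul_nonneg hκ.le (mul_nonneg (sq_nonneg a) (sq_nonneg b))]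
    · have hs' : 0 < s := lt_of_le_of_ne hs (Ne.symm h)
      nlinarith [pow_pos hs' 4, mul_nonneg h1.le (pow_nonneg ha 4), mul_nonneg h2.le (pow_nonneg hb 4), mul_nonneg hκ.le (mul_nonneg (sq_nonneg a) (sq_nonneg b))]
end

section
/- Let A be a 4th order 3-dimensional symmetric tensor satisfying: all of a₁₁₁₁, a₂₂₂₂, a₃₃₃₃, a₁₁₂₃, a₁₂₂₃, a₁₂₃₃ are ≥ 0; η₁ = 2a₁₁₁₂ + (a₁₁₁₁³a₂₂₂₂)^(1/4) ≥ 0, μ₁ = 2a₁₂₂₂ + (a₁₁₁₁a₂₂₂₂³)^(1/4) ≥ 0, η₂ = 2a₁₁₁₃ + (a₁₁₁₁³a₃₃₃₃)^(1/4) ≥ 0, μ₂ = 2a₁₃₃₃ + (a₁₁₁₁a₃₃₃₃³)^(1/4) ≥ 0, η₃ = 2a₂₂₂₃ + (a₂₂₂₂³a₃₃₃₃)^(1/4) ≥ 0, μ₃ = 2a₂₃₃₃ + (a₂₂₂₂a₃₃₃₃³)^(1/4) ≥ 0; and 3(2a₁₁₂₂ − √(a₁₁₁₁a₂₂₂₂))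 + 4√(η₁μ₁) ≥ 0, 3(2a₁₁₃₃ − √(a₁₁₁₁a₃₃₃₃)) + 4√(η₂μ₂) ≥ 0, 3(2a₂₂₃₃ − √(a₂₂₂₂a₃₃₃₃)) + 4√(η₃μ₃) ≥ 0. Then A is copositive. -/
lemma pow4_rpow (c : ℝ) (hc : 0 ≤ c) : (c ^ 4) ^ ((1:ℝ)/4) = c := by
  rw [← Real.rpow_natCast c 4, ← Real.rpow_mul hc]
  norm_num

lemma binary_quartic_nonneg (b0 b1 b2 b3 b4 : ℝ)
    (h0 : 0 ≤ b0) (h4 : 0 ≤ b4)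
    (hη : 0 ≤ b1 + (b0 ^ 3 * b4) ^ ((1:ℝ)/4))
    (hμ : 0 ≤ b3 + (b0 * b4 ^ 3) ^ ((1:ℝ)/4))
    (hθ : 0 ≤ 3 * (b2 - Real.sqrt (b0 * b4))
        + 4 * Real.sqrt ((b1 + (b0 ^ 3 * b4) ^ ((1:ℝ)/4)) * (b3 + (b0 * b4 ^ 3) ^ ((1:ℝ)/4))))
    (x y : ℝ) (hx : 0 ≤ x) (hy : 0 ≤ y) :
    0 ≤ b0 * x ^ 4 + 4 * b1 * x ^ 3 * y + 6 * b2 * x ^ 2 * y ^ 2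
        + 4 * b3 * x * y ^ 3 + b4 * y ^ 4 := by
  set p := b0 ^ ((1:ℝ)/4) with hpdef
  set q := b4 ^ ((1:ℝ)/4) with hqdef
  have hp : 0 ≤ p := Real.rpow_nonneg h0 _
  have hq : 0 ≤ q := Real.rpow_nonneg h4 _
  have hp4 : p ^ 4 = b0 := by
    rw [hpdef, ← Real.rpow_natCast (b0 ^ ((1:ℝ)/4)) 4, ← Real.rpow_mul h0]
    norm_num
  have hq4 : q ^ 4 = b4 := by
    rw [hqdef, ← Real.rpow_natCast (b4 ^ ((1:ℝ)/4)) 4, ← Real.rpow_mul h4]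
    norm_num
  have hα : (b0 ^ 3 * b4) ^ ((1:ℝ)/4) = p ^ 3 * q := by
    rw [← hp4, ← hq4, show (p ^ 4) ^ 3 * q ^ 4 = (p ^ 3 * q) ^ 4 by ring,
      pow4_rpow _ (by positivity)]
  have hβ : (b0 * b4 ^ 3) ^ ((1:ℝ)/4) = p * q ^ 3 := by
    rw [← hp4, ← hq4, show p ^ 4 * (q ^ 4) ^ 3 = (p * q ^ 3) ^ 4 by ring,
      pow4_rpow _ (by positivity)]
  have hs : Real.sqrt (b0 * b4) = p ^ 2 * q ^ 2 := by
    rw [← hp4, ← hq4, show p ^ 4 * q ^ 4 = (p ^ 2 * q ^ 2) ^ 2 by ring,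
      Real.sqrt_sq (by positivity)]
  rw [hα] at hη hθ
  rw [hβ] at hμ hθ
  rw [hs] at hθ
  set η := b1 + p ^ 3 * q with hηdef
  set μ := b3 + p * q ^ 3 with hμdef
  set t := Real.sqrt (η * μ) with htdef
  have ht : 0 ≤ t := Real.sqrt_nonneg _
  have hst : Real.sqrt η * Real.sqrt μ = t := (Real.sqrt_mul hη μ).symm
  have hηs : Real.sqrt η ^ 2 = η := Real.sq_sqrt hη
  have hμs : Real.sqrt μ ^ 2 = μ := Real.sq_sqrt hμ
  have amgm : 2 * t * (x * y) ≤ η * x ^ 2 + μ * y ^ 2 := by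
    calc 2 * t * (x * y) = 2 * (Real.sqrt η * x) * (Real.sqrt μ * y) := by
          rw [← hst]; ring
      _ ≤ (Real.sqrt η * x) ^ 2 + (Real.sqrt μ * y) ^ 2 := two_mul_le_add_sq _ _
      _ = η * x ^ 2 + μ * y ^ 2 := by rw [mul_pow, mul_pow, hηs, hμs]
  have key : b0 * x ^ 4 + 4 * b1 * x ^ 3 * y + 6 * b2 * x ^ 2 * y ^ 2
        + 4 * b3 * x * y ^ 3 + b4 * y ^ 4
      = (p * x - q * y) ^ 4
        + 4 * (x * y) * (η * x ^ 2 + μ * y ^ 2 - 2 * t * (x * y))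
        + (3 * (b2 - p ^ 2 * q ^ 2) + 4 * t) * (2 * x ^ 2 * y ^ 2) := by
    rw [← hp4, ← hq4, hηdef, hμdef]; ring
  rw [key]
  have e1 : 0 ≤ (p * x - q * y) ^ 4 := by positivity
  have e2 : 0 ≤ 4 * (x * y) * (η * x ^ 2 + μ * y ^ 2 - 2 * t * (x * y)) := by
    apply mul_nonneg (by positivity); linarith
  have e3 : 0 ≤ (3 * (b2 - p ^ 2 * q ^ 2) + 4 * t) * (2 * x ^ 2 * y ^ 2) :=
    mul_nonneg hθ (by positivity)
  linarith

theorem copositive_dim3_sufficient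
    (a1111 a2222 a3333 a1112 a1113 a1222 a1333 a2223 a2333
      a1122 a1133 a2233 a1123 a1223 a1233 : ℝ)
    (h1 : 0 ≤ a1111) (h2 : 0 ≤ a2222) (h3 : 0 ≤ a3333)
    (h4 : 0 ≤ a1123) (h5 : 0 ≤ a1223) (h6 : 0 ≤ a1233)
    (hη1 : 0 ≤ 2 * a1112 + (a1111 ^ 3 * a2222) ^ ((1:ℝ)/4))
    (hμ1 : 0 ≤ 2 * a1222 + (a1111 * a2222 ^ 3) ^ ((1:ℝ)/4))
    (hη2 : 0 ≤ 2 * a1113 + (a1111 ^ 3 * a3333) ^ ((1:ℝ)/4))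
    (hμ2 : 0 ≤ 2 * a1333 + (a1111 * a3333 ^ 3) ^ ((1:ℝ)/4))
    (hη3 : 0 ≤ 2 * a2223 + (a2222 ^ 3 * a3333) ^ ((1:ℝ)/4))
    (hμ3 : 0 ≤ 2 * a2333 + (a2222 * a3333 ^ 3) ^ ((1:ℝ)/4))
    (hθ1 : 0 ≤ 3 * (2 * a1122 - Real.sqrt (a1111 * a2222))
        + 4 * Real.sqrt ((2 * a1112 + (a1111 ^ 3 * a2222) ^ ((1:ℝ)/4))
            * (2 * a1222 + (a1111 * a2222 ^ 3) ^ ((1:ℝ)/4))))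
    (hθ2 : 0 ≤ 3 * (2 * a1133 - Real.sqrt (a1111 * a3333))
        + 4 * Real.sqrt ((2 * a1113 + (a1111 ^ 3 * a3333) ^ ((1:ℝ)/4))
            * (2 * a1333 + (a1111 * a3333 ^ 3) ^ ((1:ℝ)/4))))
    (hθ3 : 0 ≤ 3 * (2 * a2233 - Real.sqrt (a2222 * a3333))
        + 4 * Real.sqrt ((2 * a2223 + (a2222 ^ 3 * a3333) ^ ((1:ℝ)/4))
            * (2 * a2333 + (a2222 * a3333 ^ 3) ^ ((1:ℝ)/4)))) :
    ∀ x1 x2 x3 : ℝ, 0 ≤ x1 → 0 ≤ x2 → 0 ≤ x3 →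
      0 ≤ a1111 * x1 ^ 4 + a2222 * x2 ^ 4 + a3333 * x3 ^ 4
          + 4 * a1112 * x1 ^ 3 * x2 + 4 * a1222 * x1 * x2 ^ 3
          + 4 * a1113 * x1 ^ 3 * x3 + 4 * a1333 * x1 * x3 ^ 3
          + 4 * a2223 * x2 ^ 3 * x3 + 4 * a2333 * x2 * x3 ^ 3
          + 6 * a1122 * x1 ^ 2 * x2 ^ 2 + 6 * a1133 * x1 ^ 2 * x3 ^ 2
          + 6 * a2233 * x2 ^ 2 * x3 ^ 2
          + 12 * a1123 * x1 ^ 2 * x2 * x3 + 12 * a1223 * x1 * x2 ^ 2 * x3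
          + 12 * a1233 * x1 * x2 * x3 ^ 2 := by
  intro x1 x2 x3 hx1 hx2 hx3
  have B12 := binary_quartic_nonneg a1111 (2 * a1112) (2 * a1122) (2 * a1222) a2222
    h1 h2 hη1 hμ1 hθ1 x1 x2 hx1 hx2
  have B13 := binary_quartic_nonneg a1111 (2 * a1113) (2 * a1133) (2 * a1333) a3333
    h1 h3 hη2 hμ2 hθ2 x1 x3 hx1 hx3
  have B23 := binary_quartic_nonneg a2222 (2 * a2223) (2 * a2233) (2 * a2333) a3333
    h2 h3 hη3 hμ3 hθ3 x2 x3 hx2 hx3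
  have c1 : 0 ≤ 12 * a1123 * x1 ^ 2 * x2 * x3 := by positivity
  have c2 : 0 ≤ 12 * a1223 * x1 * x2 ^ 2 * x3 := by positivity
  have c3 : 0 ≤ 12 * a1233 * x1 * x2 * x3 ^ 2 := by positivity
  nlinarith [B12, B13, B23, c1, c2, c3]
end

section
/- Let F(A,B,C,a,b,c) denote the quadratic form F(1−t, tv, tw) = A(1−t)² + 2(bw + cv)t(1−t) + (Bv² + 2avw + Cw²)t², where w = 1−v. If A ≥ 0, B ≥ 0, C ≥ 0, a + √(BC) ≥ 0, b + √(AC) ≥ 0, c + √(AB) ≥ 0, and √(ABC) + a√A + b√B + c√C + √(2(a+√(BC))(b+√(AC))(c+√(AB))) ≥ 0, then F(1−t, tv, tw) ≥ 0 for all t ∈ [0,1] and all v ∈ [0,1] with w = 1−v. -/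
private lemma cs_nn_of_mul {k q : ℝ} (hk : 0 < k) (h : 0 ≤ k * q) : 0 ≤ q := by
  nlinarith

/-- Trichotomy case: when `sA*sB*sC + a*sA + b*sB + c*sC ≥ 0`. -/
private lemma cs_tri (sA sB sC a b c x y z : ℝ)
    (hsA : 0 < sA) (hsB : 0 < sB) (hsC : 0 < sC)
    (hx : 0 ≤ x) (hy : 0 ≤ y) (hz : 0 ≤ z)
    (hα : 0 ≤ a + sB*sC) (hβ : 0 ≤ b + sA*sC) (hγ : 0 ≤ c + sA*sB)
    (hS : 0 ≤ sA*sB*sC + a*sA + b*sB + c*sC) :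
    0 ≤ sA^2*x^2 + sB^2*y^2 + sC^2*z^2 + 2*a*(y*z) + 2*b*(x*z) + 2*c*(x*y) := by
  rcases le_total (sB*(y*z)) (sA*(x*z)) with h1 | h1
  · rcases le_total (sC*(y*z)) (sA*(x*y)) with h2 | h2
    · -- y*z/sA minimal
      refine cs_nn_of_mul hsA ?_
      nlinarith [mul_nonneg hsA.le (sq_nonneg (sA*x - sB*y - sC*z)),
        mul_nonneg hβ (sub_nonneg.mpr h1), mul_nonneg hγ (sub_nonneg.mpr h2),
        mul_nonneg hS (mul_nonneg hy hz)]
    · -- x*y/sC minimal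
      refine cs_nn_of_mul (mul_pos hsA hsC) ?_
      nlinarith [mul_nonneg (mul_nonneg hsA.le hsC.le) (sq_nonneg (sC*z - sA*x - sB*y)),
        mul_nonneg (mul_nonneg hβ hsC.le) (sub_nonneg.mpr h1),
        mul_nonneg (mul_nonneg hβ hsB.le) (sub_nonneg.mpr h2),
        mul_nonneg (mul_nonneg hα hsA.le) (sub_nonneg.mpr h2),
        mul_nonneg hS (mul_nonneg (mul_nonneg hsA.le hx) hy)]
  · rcases le_total (sC*(x*z)) (sB*(x*y)) with h2 | h2
    · -- x*z/sB minimal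
      refine cs_nn_of_mul hsB ?_
      nlinarith [mul_nonneg hsB.le (sq_nonneg (sB*y - sA*x - sC*z)),
        mul_nonneg hα (sub_nonneg.mpr h1), mul_nonneg hγ (sub_nonneg.mpr h2),
        mul_nonneg hS (mul_nonneg hx hz)]
    · -- x*y/sC minimal (other route)
      refine cs_nn_of_mul (mul_pos hsB hsC) ?_
      nlinarith [mul_nonneg (mul_nonneg hsB.le hsC.le) (sq_nonneg (sC*z - sA*x - sB*y)),
        mul_nonneg (mul_nonneg hβ hsB.le) (sub_nonneg.mpr h2),
        mul_nonneg (mul_nonneg hα hsC.le) (sub_nonneg.mpr h1),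
        mul_nonneg (mul_nonneg hα hsA.le) (sub_nonneg.mpr h2),
        mul_nonneg hS (mul_nonneg (mul_nonneg hsB.le hx) hy)]

/-- PSD case: if the matrix is positive semidefinite (via minors) the form is
nonnegative everywhere. -/
private lemma cs_psd (A B C a b c x y z : ℝ) (hA : 0 < A) (hm : 0 < A*B - c^2)
    (hD : 0 ≤ A*B*C + 2*a*b*c - A*a^2 - B*b^2 - C*c^2) :
    0 ≤ A*x^2 + B*y^2 + C*z^2 + 2*a*(y*z) + 2*b*(x*z) + 2*c*(x*y) := by
  refine cs_nn_of_mul (mul_pos hA hm) ?_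
  nlinarith [mul_nonneg hm.le (sq_nonneg (A*x + c*y + b*z)),
    sq_nonneg ((A*B - c^2)*y + (A*a - b*c)*z),
    mul_nonneg (mul_nonneg hA.le hD) (sq_nonneg z)]

private lemma cs_key (sA sB sC a b c x y z : ℝ)
    (hsA : 0 ≤ sA) (hsB : 0 ≤ sB) (hsC : 0 ≤ sC)
    (hx : 0 ≤ x) (hy : 0 ≤ y) (hz : 0 ≤ z)
    (hα : 0 ≤ a + sB*sC) (hβ : 0 ≤ b + sA*sC) (hγ : 0 ≤ c + sA*sB)
    (hkey : 0 ≤ sA*sB*sC + a*sA + b*sB + c*sC ∨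
      (sA*sB*sC + a*sA + b*sB + c*sC)^2 ≤ 2*(a+sB*sC)*(b+sA*sC)*(c+sA*sB)) :
    0 ≤ sA^2*x^2 + sB^2*y^2 + sC^2*z^2 + 2*a*(y*z) + 2*b*(x*z) + 2*c*(x*y) := by
  by_cases h1 : sB*sC ≤ a
  · nlinarith [sq_nonneg (sA*x - sB*y - sC*z),
      mul_nonneg (sub_nonneg.mpr h1) (mul_nonneg hy hz),
      mul_nonneg hβ (mul_nonneg hx hz), mul_nonneg hγ (mul_nonneg hx hy)]
  by_cases h2 : sA*sC ≤ b
  · nlinarith [sq_nonneg (sB*y - sA*x - sC*z),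
      mul_nonneg (sub_nonneg.mpr h2) (mul_nonneg hx hz),
      mul_nonneg hα (mul_nonneg hy hz), mul_nonneg hγ (mul_nonneg hx hy)]
  by_cases h3 : sA*sB ≤ c
  · nlinarith [sq_nonneg (sC*z - sA*x - sB*y),
      mul_nonneg (sub_nonneg.mpr h3) (mul_nonneg hx hy),
      mul_nonneg hα (mul_nonneg hy hz), mul_nonneg hβ (mul_nonneg hx hz)]
  push_neg at h1 h2 h3
  have hsA' : 0 < sA := by
    rcases eq_or_lt_of_le hsA with h | h
    · exfalso; rw [← h] at hβ h2; simp at hβ h2; linarith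
    · exact h
  have hsB' : 0 < sB := by
    rcases eq_or_lt_of_le hsB with h | h
    · exfalso; rw [← h] at hα h1; simp at hα h1; linarith
    · exact h
  have hsC' : 0 < sC := by
    rcases eq_or_lt_of_le hsC with h | h
    · exfalso; rw [← h] at hα h1; simp at hα h1; linarith
    · exact h
  rcases hkey with hS | hD
  · exact cs_tri sA sB sC a b c x y z hsA' hsB' hsC' hx hy hz hα hβ hγ hS
  · by_cases hS0 : 0 ≤ sA*sB*sC + a*sA + b*sB + c*sC
    · exact cs_tri sA sB sC a b c x y z hsA' hsB' hsC' hx hy hz hα hβ hγ hS0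
    · push_neg at hS0
      have hS2 : 0 < (sA*sB*sC + a*sA + b*sB + c*sC)^2 := by nlinarith
      have hγ' : 0 < c + sA*sB := by
        rcases eq_or_lt_of_le hγ with h | h
        · exfalso; nlinarith [mul_nonneg hα hβ]
        · exact h
      have hm : 0 < sA^2*sB^2 - c^2 := by
        nlinarith [mul_pos (sub_pos.mpr h3) hγ']
      have hD' : 0 ≤ sA^2*sB^2*sC^2 + 2*a*b*c - sA^2*a^2 - sB^2*b^2 - sC^2*c^2 := by
        have e : 2*(a+sB*sC)*(b+sA*sC)*(c+sA*sB) - (sA*sB*sC + a*sA + b*sB + c*sC)^2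
            = sA^2*sB^2*sC^2 + 2*a*b*c - sA^2*a^2 - sB^2*b^2 - sC^2*c^2 := by ring
        linarith
      exact cs_psd (sA^2) (sB^2) (sC^2) a b c x y z (by positivity) hm hD'

theorem chang_sederberg_sufficiency (A B C a b c : ℝ)
    (hA : 0 ≤ A) (hB : 0 ≤ B) (hC : 0 ≤ C)
    (ha : 0 ≤ a + Real.sqrt (B * C))
    (hb : 0 ≤ b + Real.sqrt (A * C))
    (hc : 0 ≤ c + Real.sqrt (A * B))
    (hτ : 0 ≤ Real.sqrt (A * B * C) + a * Real.sqrt A + b * Real.sqrt B + c * Real.sqrt C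
        + Real.sqrt (2 * (a + Real.sqrt (B * C)) * (b + Real.sqrt (A * C))
            * (c + Real.sqrt (A * B)))) :
    ∀ t ∈ Set.Icc (0 : ℝ) 1, ∀ v ∈ Set.Icc (0 : ℝ) 1,
      0 ≤ A * (1 - t) ^ 2 + 2 * (b * (1 - v) + c * v) * t * (1 - t)
          + (B * v ^ 2 + 2 * a * v * (1 - v) + C * (1 - v) ^ 2) * t ^ 2 := by
  intro t ht v hv
  obtain ⟨ht0, ht1⟩ := ht
  obtain ⟨hv0, hv1⟩ := hv
  set sA := Real.sqrt A with hsAdef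
  set sB := Real.sqrt B with hsBdef
  set sC := Real.sqrt C with hsCdef
  have hsA0 : 0 ≤ sA := Real.sqrt_nonneg A
  have hsB0 : 0 ≤ sB := Real.sqrt_nonneg B
  have hsC0 : 0 ≤ sC := Real.sqrt_nonneg C
  have hsA2 : sA^2 = A := Real.sq_sqrt hA
  have hsB2 : sB^2 = B := Real.sq_sqrt hB
  have hsC2 : sC^2 = C := Real.sq_sqrt hC
  have hBC : Real.sqrt (B * C) = sB * sC := Real.sqrt_mul hB C
  have hAC : Real.sqrt (A * C) = sA * sC := Real.sqrt_mul hA C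
  have hAB : Real.sqrt (A * B) = sA * sB := Real.sqrt_mul hA B
  have hABC : Real.sqrt (A * B * C) = sA * sB * sC := by
    rw [Real.sqrt_mul (mul_nonneg hA hB), Real.sqrt_mul hA]
  rw [hBC] at ha
  rw [hAC] at hb
  rw [hAB] at hc
  rw [hBC, hAC, hAB, hABC] at hτ
  have hkey : 0 ≤ sA*sB*sC + a*sA + b*sB + c*sC ∨
      (sA*sB*sC + a*sA + b*sB + c*sC)^2 ≤ 2*(a+sB*sC)*(b+sA*sC)*(c+sA*sB) := by
    by_cases hS : 0 ≤ sA*sB*sC + a*sA + b*sB + c*sC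
    · exact Or.inl hS
    · push_neg at hS
      right
      have hP : 0 ≤ 2*(a+sB*sC)*(b+sA*sC)*(c+sA*sB) :=
        mul_nonneg (mul_nonneg (by linarith) hb) hc
      have hr : Real.sqrt (2*(a+sB*sC)*(b+sA*sC)*(c+sA*sB)) ^ 2
          = 2*(a+sB*sC)*(b+sA*sC)*(c+sA*sB) := Real.sq_sqrt hP
      have hτ2 : -(sA*sB*sC + a*sA + b*sB + c*sC)
          ≤ Real.sqrt (2*(a+sB*sC)*(b+sA*sC)*(c+sA*sB)) := by linarith
      nlinarith [mul_le_mul hτ2 hτ2 (by linarith) (Real.sqrt_nonneg _), hr]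
  have hx : (0:ℝ) ≤ 1 - t := by linarith
  have hy : (0:ℝ) ≤ t * v := mul_nonneg ht0 hv0
  have hz : (0:ℝ) ≤ t * (1 - v) := mul_nonneg ht0 (by linarith)
  have K := cs_key sA sB sC a b c (1 - t) (t * v) (t * (1 - v))
    hsA0 hsB0 hsC0 hx hy hz ha hb hc hkey
  rw [← hsA2, ← hsB2, ← hsC2]
  linarith [K]
end
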